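/- Let 𝔤 be a finite-dimensional Lie algebra over a field k with a nondegenerate symmetric invariant bilinear form ⟨,⟩ (invariance: ⟨[x,y],z⟩ = ⟨x,[y,z]⟩ for all x,y,z). Let 𝔥 ⊆ 𝔤 be a Lie subalgebra that is Lagrangian, let L be a Lagrangian subspace with 𝔤 = 𝔥 ⊕ L, let p_𝔥 be the projection onto 𝔥 along L, and set r_{𝔥,L} := (p_𝔥 ⊗ id)(t). Then for every x ∈ 𝔥, the element (ad x ⊗ id + id ⊗ ad x)(r_{𝔥,L}) of 𝔤 ⊗ 𝔤 lies in the subspace 𝔥 ⊗ 𝔥. -/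

import Mathlib

open TensorProduct

variable (k : Type*) [Field k]
variable (g : Type*) [LieRing g] [LieAlgebra k g]

/-- The subspace `U ⊗ V` of `g ⊗ g` spanned by elementary tensors `u ⊗ v`, `u ∈ U`, `v ∈ V`. -/
def tsub (U V : Submodule k g) : Submodule k (g ⊗[k] g) :=
  Submodule.span k {z | ∃ u ∈ U, ∃ v ∈ V, z = u ⊗ₜ[k] v}

/-- A subspace is Lagrangian when it equals its own orthogonal complement. -/
def IsLagrangian (B : g →ₗ[k] g →ₗ[k] k) (W : Submodule k g) : Prop :=
  ∀ x : g, x ∈ W ↔ ∀ w ∈ W, B w x = 0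

/-- The contraction `(⟨x,·⟩ ⊗ id)(t)` of a 2-tensor against `x` in the first factor. -/
noncomputable def contractFst (B : g →ₗ[k] g →ₗ[k] k) (x : g) : g ⊗[k] g →ₗ[k] g :=
  (TensorProduct.lid k g).toLinearMap ∘ₗ TensorProduct.map (B x) LinearMap.id

theorem stmt6 [FiniteDimensional k g] (B : g →ₗ[k] g →ₗ[k] k)
    (hsymm : ∀ x y : g, B x y = B y x)
    (hnondeg : ∀ x : g, (∀ y : g, B x y = 0) → x = 0)
    -- invariance of the bilinear form
    (hinvar : ∀ x y z : g, B ⁅x, y⁆ z = B x ⁅y, z⁆)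
    -- `t` is the canonical element of `B`
    (t : g ⊗[k] g) (ht : ∀ x : g, contractFst k g B x t = x)
    -- `𝔥` a Lagrangian Lie subalgebra, `L` a Lagrangian complement
    (H : LieSubalgebra k g) (hH : IsLagrangian k g B H.toSubmodule)
    (L : Submodule k g) (hL : IsLagrangian k g B L)
    (hcompl : IsCompl H.toSubmodule L)
    -- `p_𝔥` the projection onto `𝔥` along `L`
    (pH : g →ₗ[k] g) (hpH1 : ∀ x ∈ H, pH x = x) (hpH2 : ∀ x ∈ L, pH x = 0) :
    -- for `x ∈ 𝔥`, `(ad x ⊗ id + id ⊗ ad x)(r_{𝔥,L}) ∈ 𝔥 ⊗ 𝔥`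
    ∀ x ∈ H,
      (TensorProduct.map (LieAlgebra.ad k g x : g →ₗ[k] g) LinearMap.id +
          TensorProduct.map LinearMap.id (LieAlgebra.ad k g x : g →ₗ[k] g) :
            g ⊗[k] g →ₗ[k] g ⊗[k] g)
        (TensorProduct.map pH LinearMap.id t) ∈
        tsub k g H.toSubmodule H.toSubmodule := by
  classical
  intro x hx
  set A : g →ₗ[k] g := (LieAlgebra.ad k g x : g →ₗ[k] g) with hA
  have hAapp : ∀ y : g, A y = ⁅x, y⁆ := fun y => rfl
  set pL : g →ₗ[k] g := LinearMap.id - pH with hpL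
  -- membership translations
  have hmemH : ∀ y : g, y ∈ H.toSubmodule ↔ y ∈ H := fun y => Iff.rfl
  -- bilinear vanishing on H and L
  have hBH0 : ∀ a ∈ H, ∀ b ∈ H, B a b = 0 := by
    intro a ha b hb
    exact (hH b).mp hb a ha
  have hBL0 : ∀ a ∈ L, ∀ b ∈ L, B a b = 0 := by
    intro a ha b hb
    exact (hL b).mp hb a ha
  -- decomposition facts
  have hdecomp : ∀ y : g, pH y ∈ H ∧ y - pH y ∈ L := by
    intro y
    have hy : y ∈ H.toSubmodule ⊔ L := by
      rw [hcompl.sup_eq_top]; exact Submodule.mem_top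
    obtain ⟨h, hh, l, hl, hy⟩ := Submodule.mem_sup.mp hy
    have hpHy : pH y = h := by
      rw [← hy, map_add, hpH1 h hh, hpH2 l hl, add_zero]
    constructor
    · rw [hpHy]; exact hh
    · rw [hpHy, ← hy]; simpa using hl
  have hpHmem : ∀ y : g, pH y ∈ H := fun y => (hdecomp y).1
  have hpLmem : ∀ y : g, pL y ∈ L := by
    intro y
    simpa [hpL] using (hdecomp y).2
  -- the pairing machinery
  set Φ : g ⊗[k] g →ₗ[k] g →ₗ[k] Module.Dual k g :=
    (dualTensorHom k g (Module.Dual k g)) ∘ₗ TensorProduct.map B B with hΦ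
  have hΦtmul : ∀ u v y z : g, Φ (u ⊗ₜ[k] v) y z = B u y * B v z := by
    intro u v y z
    simp [hΦ, dualTensorHom_apply, LinearMap.smul_apply, smul_eq_mul]
  have hBinj : Function.Injective B := by
    intro a b hab
    have h0 : ∀ y, B (a - b) y = 0 := by
      intro y; rw [map_sub, LinearMap.sub_apply, hab, sub_self]
    have := hnondeg _ h0
    exact sub_eq_zero.mp this
  have hΦinj : Function.Injective Φ := by
    have hmap : Function.Injective (TensorProduct.map B B) := by
      have e : TensorProduct.map B B =
          (LinearMap.rTensor (Module.Dual k g) B).comp (LinearMap.lTensor g B) := by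
        ext u v
        simp
      rw [e]
      exact ((Module.Flat.rTensor_preserves_injective_linearMap (M := Module.Dual k g) B hBinj).comp
        (Module.Flat.lTensor_preserves_injective_linearMap (M := g) B hBinj))
    have hdt : Function.Injective (dualTensorHom k g (Module.Dual k g)) := by
      intro a b hab
      apply (dualTensorHomEquiv k g (Module.Dual k g)).injective
      show dualTensorHom k g (Module.Dual k g) a = dualTensorHom k g (Module.Dual k g) b
      rw [hab]
    have : Function.Injective ((dualTensorHom k g (Module.Dual k g)) ∘ (TensorProduct.map B B)) :=
      hdt.comp hmap
    intro a b hab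
    apply this
    simp only [Function.comp_apply]
    have : Φ a = Φ b := hab
    simpa [hΦ] using this
  -- second-slot contraction
  set cS : g → g ⊗[k] g →ₗ[k] g :=
    fun c => contractFst k g B c ∘ₗ (TensorProduct.comm k g g).toLinearMap with hcS
  have hcFtmul : ∀ c u v : g, contractFst k g B c (u ⊗ₜ[k] v) = B c u • v := by
    intro c u v
    simp [contractFst]
  have hcStmul : ∀ c u v : g, cS c (u ⊗ₜ[k] v) = B c v • u := by
    intro c u v
    simp [hcS, contractFst]
  have hBcS : ∀ (c y : g) (w : g ⊗[k] g),
      B (cS c w) y = B c (contractFst k g B y w) := by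
    intro c y w
    induction w using TensorProduct.induction_on with
    | zero => simp
    | tmul u v =>
      rw [hcStmul, hcFtmul, map_smul, map_smul]
      simp only [LinearMap.smul_apply, smul_eq_mul]
      rw [hsymm u y]; ring
    | add w1 w2 ih1 ih2 => simp [map_add, ih1, ih2]
  have hcSt : ∀ c : g, cS c t = c := by
    intro c
    have h0 : ∀ y, B (cS c t - c) y = 0 := by
      intro y
      rw [map_sub, LinearMap.sub_apply, hBcS, ht y, sub_self]
    exact sub_eq_zero.mp (hnondeg _ h0)
  -- the element in question
  set M0 : g ⊗[k] g →ₗ[k] g ⊗[k] g :=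
    (TensorProduct.map A LinearMap.id + TensorProduct.map LinearMap.id A) ∘ₗ
      TensorProduct.map pH LinearMap.id with hM0
  have hM0tmul : ∀ u v : g,
      M0 (u ⊗ₜ[k] v) = ⁅x, pH u⁆ ⊗ₜ[k] v + pH u ⊗ₜ[k] ⁅x, v⁆ := by
    intro u v
    simp [hM0, hAapp]
  -- key vanishing: (id ⊗ pL) M0 t = 0
  have hBpL : ∀ a ∈ H, ∀ c : g, B (pL c) a = B c a := by
    intro a ha c
    have : pL c = c - pH c := by simp [hpL]
    rw [this, map_sub, LinearMap.sub_apply, hBH0 (pH c) (hpHmem c) a ha, sub_zero]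
  have hkeyH : ∀ a ∈ H, ∀ (w : g ⊗[k] g) (y : g),
      Φ (TensorProduct.map LinearMap.id pL (M0 w)) y a =
        B ⁅x, pH (cS a w)⁆ y - B (pH (cS ⁅x, a⁆ w)) y := by
    intro a ha w y
    induction w using TensorProduct.induction_on with
    | zero =>
      simp only [map_zero, LinearMap.zero_apply, lie_zero, sub_zero]
    | tmul u v =>
      rw [hM0tmul]
      rw [map_add]
      simp only [TensorProduct.map_tmul, LinearMap.id_coe, id_eq]
      rw [map_add, LinearMap.add_apply, LinearMap.add_apply, hΦtmul, hΦtmul]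
      rw [hcStmul, hcStmul]
      rw [hBpL a ha v, hBpL a ha ⁅x, v⁆]
      have e2 : B ⁅x, v⁆ a = - B ⁅x, a⁆ v := by
        rw [hinvar x v a, hinvar x a v, ← lie_skew a v, map_neg, neg_neg]
      rw [e2]
      rw [map_smul, map_smul, map_smul, lie_smul, map_smul]
      simp only [LinearMap.smul_apply, smul_eq_mul]
      rw [hsymm v a]
      ring
    | add w1 w2 ih1 ih2 =>
      simp only [map_add, LinearMap.add_apply, lie_add, ih1, ih2]
      ring
  have hkeyL : ∀ l ∈ L, ∀ (w : g ⊗[k] g) (y : g),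
      Φ (TensorProduct.map LinearMap.id pL (M0 w)) y l = 0 := by
    intro l hl w y
    induction w using TensorProduct.induction_on with
    | zero => simp
    | tmul u v =>
      rw [hM0tmul, map_add]
      simp only [TensorProduct.map_tmul, LinearMap.id_coe, id_eq]
      rw [map_add, LinearMap.add_apply, LinearMap.add_apply, hΦtmul, hΦtmul]
      rw [hBL0 (pL v) (hpLmem v) l hl, hBL0 (pL ⁅x, v⁆) (hpLmem ⁅x, v⁆) l hl]
      ring
    | add w1 w2 ih1 ih2 =>
      simp only [map_add, LinearMap.add_apply, ih1, ih2]
      ring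
  have hz : TensorProduct.map LinearMap.id pL (M0 t) = 0 := by
    apply hΦinj
    rw [map_zero]
    apply LinearMap.ext; intro y
    apply LinearMap.ext; intro z
    simp only [LinearMap.zero_apply]
    have hzv : pH z + (z - pH z) = z := by abel
    rw [← hzv, map_add]
    rw [hkeyH (pH z) (hpHmem z) t y, hkeyL (z - pH z) (hdecomp z).2 t y]
    rw [hcSt, hcSt]
    rw [hpH1 (pH z) (hpHmem z), hpH1 ⁅x, pH z⁆ (H.lie_mem hx (hpHmem z))]
    ring
  -- membership of (id ⊗ pH) M0 t
  have hmem : ∀ w : g ⊗[k] g,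
      TensorProduct.map LinearMap.id pH (M0 w) ∈ tsub k g H.toSubmodule H.toSubmodule := by
    intro w
    induction w using TensorProduct.induction_on with
    | zero => simp
    | tmul u v =>
      rw [hM0tmul, map_add]
      simp only [TensorProduct.map_tmul, LinearMap.id_coe, id_eq]
      apply Submodule.add_mem
      · exact Submodule.subset_span ⟨⁅x, pH u⁆, H.lie_mem hx (hpHmem u), pH v, hpHmem v, rfl⟩
      · exact Submodule.subset_span ⟨pH u, hpHmem u, pH ⁅x, v⁆, hpHmem ⁅x, v⁆, rfl⟩
    | add w1 w2 ih1 ih2 =>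
      rw [map_add, map_add]
      exact Submodule.add_mem _ ih1 ih2
  -- conclude
  have hfinal : (TensorProduct.map A LinearMap.id + TensorProduct.map LinearMap.id A :
      g ⊗[k] g →ₗ[k] g ⊗[k] g) (TensorProduct.map pH LinearMap.id t) = M0 t := rfl
  rw [hfinal]
  have hdec2 : M0 t = TensorProduct.map LinearMap.id pH (M0 t) +
      TensorProduct.map LinearMap.id pL (M0 t) := by
    rw [← LinearMap.add_apply, ← TensorProduct.map_add_right]
    have : pH + pL = LinearMap.id := by simp [hpL]
    rw [this, TensorProduct.map_id, LinearMap.id_apply]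
  rw [hdec2, hz, add_zero]
  exact hmem t
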